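/- Let M > 0, h ≥ 1, R > 1, and let ω ∈ C^∞(ℝ) satisfy |ω(ξ)| ≤ 1 for all ξ, ω(ξ) = 0 for |ξ| ≤ 1, and ω constant on each of {ξ ≥ R} and {ξ ≤ −R}. Define λ(x,ξ) := M·ω(ξ/h)·∫₀ˣ ⟨y⟩^{-1} dy. Then for all integers α ≥ 1, β ≥ 1 there exists C_{α,β} > 0 (depending on α, β, M, R, ω but not on h, x, ξ) such that, for either choice of sign, |∂_ξ^α ∂_x^β e^{±λ(x,ξ)}| ≤ C_{α,β}·(1 + ln⟨x⟩·χ_{E_{h,R}}(ξ))^α·⟨x⟩^{−β}·⟨ξ⟩_h^{−α}·e^{±λ(x,ξ)} for all x, ξ ∈ ℝ, where χ_{E_{h,R}} is the characteristic function of E_{h,R} = {ξ ∈ ℝ : h ≤ |ξ| ≤ hR}. -/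

import Mathlib

open MeasureTheory Real Finset Polynomial

noncomputable section



/-- The Japanese bracket `⟨x⟩ = (1 + x²)^(1/2)`. -/
def jb (x : ℝ) : ℝ := Real.sqrt (1 + x ^ 2)

/-- `⟨ξ⟩ₕ = (h² + ξ²)^(1/2)`. -/
def jbh (h ξ : ℝ) : ℝ := Real.sqrt (h ^ 2 + ξ ^ 2)

lemma jb_pos (x : ℝ) : 0 < jb x := Real.sqrt_pos.mpr (by positivity)

lemma one_le_jb (x : ℝ) : 1 ≤ jb x := by
  have := Real.sqrt_le_sqrt (show (1:ℝ) ≤ 1 + x^2 by nlinarith [sq_nonneg x])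
  simpa [jb] using this

lemma abs_le_jb (x : ℝ) : |x| ≤ jb x := by
  rw [jb, ← Real.sqrt_sq_eq_abs]
  exact Real.sqrt_le_sqrt (by nlinarith)

lemma one_le_jbh {h : ℝ} (hh : 1 ≤ h) (ξ : ℝ) : 1 ≤ jbh h ξ := by
  have h2 : (1:ℝ) ≤ h^2 + ξ^2 := by nlinarith
  have := Real.sqrt_le_sqrt h2
  simpa [jbh] using this

lemma jbh_pos {h : ℝ} (hh : 1 ≤ h) (ξ : ℝ) : 0 < jbh h ξ :=
  lt_of_lt_of_le one_pos (one_le_jbh hh ξ)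

lemma integral_jb_inv (x : ℝ) : (∫ y in (0:ℝ)..x, (jb y)⁻¹) = Real.arsinh x := by
  have h : ∀ y ∈ Set.uIcc (0:ℝ) x, HasDerivAt Real.arsinh (jb y)⁻¹ y := fun y _ =>
    Real.hasDerivAt_arsinh y
  have hc : ContinuousOn (fun y => (jb y)⁻¹) (Set.uIcc (0:ℝ) x) := by
    apply Continuous.continuousOn
    exact ((Real.continuous_sqrt.comp (by continuity)).inv₀ (fun y => (jb_pos y).ne'))
  rw [intervalIntegral.integral_eq_sub_of_hasDerivAt h (hc.intervalIntegrable)]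
  simp [Real.arsinh_zero]

lemma abs_arsinh_le (x : ℝ) : |Real.arsinh x| ≤ Real.log 2 + Real.log (jb x) := by
  have h1 : ∀ y : ℝ, 0 ≤ y → Real.arsinh y ≤ Real.log 2 + Real.log (jb y) := by
    intro y hy
    rw [Real.arsinh, ← Real.log_mul (by norm_num) (jb_pos y).ne']
    apply Real.log_le_log (by positivity)
    have := abs_le_jb y
    rw [abs_of_nonneg hy] at this
    show y + Real.sqrt (1 + y^2) ≤ 2 * jb y
    simp only [jb] at this ⊢; linarith
  rcases le_or_gt 0 x with hx | hx
  · rw [abs_of_nonneg (by rwa [Real.arsinh_nonneg_iff])]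
    exact h1 x hx
  · rw [abs_of_neg (by rwa [Real.arsinh_neg_iff]), ← Real.arsinh_neg]
    have := h1 (-x) (by linarith)
    simpa [jb, neg_sq] using this

lemma log_jb_nonneg (x : ℝ) : 0 ≤ Real.log (jb x) := Real.log_nonneg (one_le_jb x)



lemma iteratedDeriv_add' {f g : ℝ → ℝ} (hf : ContDiff ℝ (⊤:ℕ∞) f) (hg : ContDiff ℝ (⊤:ℕ∞) g)
    (n : ℕ) (x : ℝ) :
    iteratedDeriv n (fun y => f y + g y) x = iteratedDeriv n f x + iteratedDeriv n g x := by
  simp only [← iteratedDerivWithin_univ]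
  exact iteratedDerivWithin_add (Set.mem_univ x) uniqueDiffOn_univ
    (hf.contDiffWithinAt.of_le (by exact_mod_cast le_top)) (hg.contDiffWithinAt.of_le (by exact_mod_cast le_top))

lemma iteratedDeriv_cmul {f : ℝ → ℝ} (hf : ContDiff ℝ (⊤:ℕ∞) f) (c : ℝ) (n : ℕ) (x : ℝ) :
    iteratedDeriv n (fun y => c * f y) x = c * iteratedDeriv n f x := by
  simp only [← iteratedDerivWithin_univ]
  exact iteratedDerivWithin_const_mul (Set.mem_univ x) uniqueDiffOn_univ c
    (hf.contDiffWithinAt.of_le (by exact_mod_cast le_top))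

lemma iteratedDeriv_sum' {ι : Type*} (s : Finset ι) (f : ι → ℝ → ℝ)
    (hf : ∀ i ∈ s, ContDiff ℝ (⊤:ℕ∞) (f i)) (n : ℕ) (x : ℝ) :
    iteratedDeriv n (fun y => ∑ i ∈ s, f i y) x = ∑ i ∈ s, iteratedDeriv n (f i) x := by
  classical
  induction s using Finset.induction with
  | empty =>
    simp only [Finset.sum_empty]
    rw [show (fun _ : ℝ => (0:ℝ)) = fun _ => (0:ℝ) from rfl,
      iteratedDeriv_eq_iteratedFDeriv, iteratedFDeriv_zero_fun]
    simp
  | insert a s hnotmem ih =>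
    rw [Finset.sum_insert hnotmem]
    have : (fun y => ∑ i ∈ insert a s, f i y) = fun y => f a y + ∑ i ∈ s, f i y := by
      funext y; rw [Finset.sum_insert hnotmem]
    rw [this, iteratedDeriv_add' (hf a (Finset.mem_insert_self a s))
      (ContDiff.sum fun i hi => hf i (Finset.mem_insert_of_mem hi)),
      ih (fun i hi => hf i (Finset.mem_insert_of_mem hi))]

lemma iteratedDeriv_const' (c : ℝ) (n : ℕ) (x : ℝ) :
    iteratedDeriv n (fun _ : ℝ => c) x = if n = 0 then c else 0 := by
  cases n with
  | zero => simp
  | succ k =>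
    simp only [Nat.succ_ne_zero, if_false]
    rw [iteratedDeriv_eq_iteratedFDeriv, iteratedFDeriv_const_of_ne (Nat.succ_ne_zero k)]
    simp

lemma abs_iteratedDeriv_mul_le {f g : ℝ → ℝ} (hf : ContDiff ℝ (⊤:ℕ∞) f)
    (hg : ContDiff ℝ (⊤:ℕ∞) g) (n : ℕ) (x : ℝ) :
    |iteratedDeriv n (fun y => f y * g y) x| ≤
      ∑ i ∈ Finset.range (n + 1),
        (n.choose i : ℝ) * |iteratedDeriv i f x| * |iteratedDeriv (n - i) g x| := by
  have h := norm_iteratedFDeriv_mul_le (𝕜 := ℝ) hf hg x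
    (show (n : WithTop ℕ∞) ≤ ((⊤:ℕ∞):WithTop ℕ∞) by exact_mod_cast le_top)
  simpa [norm_iteratedFDeriv_eq_norm_iteratedDeriv, Real.norm_eq_abs] using h


lemma jb_rpow (x r : ℝ) : jb x ^ r = (1 + x^2) ^ (r/2) := by
  rw [jb, Real.sqrt_eq_rpow, ← Real.rpow_mul (by positivity)]
  congr 1; ring

def ap : ℕ → Polynomial ℝ
  | 0 => 1
  | m+1 => (derivative (ap m)) * (1 + Polynomial.X^2)
      + Polynomial.C (-(2*(m:ℝ)+1)) * (Polynomial.X * ap m)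

lemma ap_natDegree : ∀ m, (ap m).natDegree ≤ m := by
  intro m
  induction m with
  | zero => simp [ap]
  | succ m ih =>
    rcases Nat.eq_zero_or_pos m with rfl | hm
    · have h1 : ap 1 = Polynomial.C (-1 : ℝ) * Polynomial.X := by
        show (derivative (ap 0)) * (1 + Polynomial.X^2)
          + Polynomial.C (-(2*((0:ℕ):ℝ)+1)) * (Polynomial.X * ap 0) = _
        simp [ap]
      rw [h1]
      compute_degree
    · apply le_trans (Polynomial.natDegree_add_le _ _)
      apply max_le
      · apply le_trans (Polynomial.natDegree_mul_le)
        have h2 : (derivative (ap m)).natDegree ≤ m - 1 :=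
          le_trans (Polynomial.natDegree_derivative_le _) (Nat.sub_le_sub_right ih 1)
        have h3 : (1 + Polynomial.X^2 : Polynomial ℝ).natDegree ≤ 2 := by compute_degree
        omega
      · apply le_trans (Polynomial.natDegree_mul_le)
        have h4 : (Polynomial.C (-(2*(m:ℝ)+1))).natDegree = 0 := Polynomial.natDegree_C _
        have h5 : (Polynomial.X * ap m : Polynomial ℝ).natDegree ≤ 1 + m := by
          apply le_trans (Polynomial.natDegree_mul_le)
          have := Polynomial.natDegree_X_le (R := ℝ)
          omega
        omega

lemma arsinh_ideriv_eq (m : ℕ) (x : ℝ) :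
    iteratedDeriv (m+1) Real.arsinh x = (ap m).eval x * (1 + x^2) ^ (-(m:ℝ) - 1/2) := by
  induction m generalizing x with
  | zero =>
    rw [iteratedDeriv_one, (Real.hasDerivAt_arsinh x).deriv]
    rw [show (-(0:ℕ) - 1/2 : ℝ) = -(1/2) by norm_num, Real.rpow_neg (by positivity)]
    rw [show ((1:ℝ) + x^2) ^ ((1:ℝ)/2) = Real.sqrt (1 + x^2) by
      rw [Real.sqrt_eq_rpow]]
    simp [ap]
  | succ m ih =>
    have hpos : (0:ℝ) < 1 + x^2 := by positivity
    set e : ℝ := -(m:ℝ) - 1/2 with he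
    rw [iteratedDeriv_succ]
    have hfun : iteratedDeriv (m+1) Real.arsinh = fun y => (ap m).eval y * (1+y^2) ^ e :=
      funext fun y => ih y
    rw [hfun]
    have hp : HasDerivAt (fun y : ℝ => (ap m).eval y) ((derivative (ap m)).eval x) x :=
      (ap m).hasDerivAt x
    have hb : HasDerivAt (fun y : ℝ => 1 + y^2) (2*x) x := by
      simpa using (hasDerivAt_pow 2 x).const_add 1
    have hr : HasDerivAt (fun y : ℝ => (1+y^2) ^ e) ((e * (1+x^2) ^ (e-1)) * (2*x)) x :=
      by have h1 := Real.hasDerivAt_rpow_const (x := 1+x^2) (p := e) (Or.inl hpos.ne'); exact h1.comp x hb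
    rw [(hp.fun_mul hr).deriv]
    have hsplit : (1+x^2) ^ e = (1+x^2) * (1+x^2) ^ (e-1) := by
      nth_rewrite 1 [show e = 1 + (e-1) by ring]
      rw [Real.rpow_add hpos, Real.rpow_one]
    rw [hsplit]
    have : (-((m:ℝ)+1) - 1/2 : ℝ) = e - 1 := by rw [he]; ring
    rw [show ((m:ℕ)+1 : ℕ) = m+1 from rfl]
    push_cast
    rw [this]
    show (derivative (ap m)).eval x * ((1+x^2) * (1+x^2)^(e-1))
        + (ap m).eval x * (e * (1+x^2)^(e-1) * (2*x)) = (ap (m+1)).eval x * (1+x^2)^(e-1)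
    have hev : (ap (m+1)).eval x = (derivative (ap m)).eval x * (1 + x^2)
        + (-(2*(m:ℝ)+1)) * (x * (ap m).eval x) := by
      show ((derivative (ap m)) * (1 + Polynomial.X^2)
        + Polynomial.C (-(2*(m:ℝ)+1)) * (Polynomial.X * ap m)).eval x = _
      simp
    rw [hev]
    have h2e : -(2*(m:ℝ)+1) = 2 * e := by rw [he]; ring
    rw [h2e]
    ring

lemma poly_eval_bound (p : Polynomial ℝ) (d : ℕ) (hd : p.natDegree ≤ d) (x : ℝ) :
    |p.eval x| ≤ (∑ i ∈ Finset.range (d+1), |p.coeff i|) * jb x ^ (d:ℕ) := by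
  rw [Polynomial.eval_eq_sum_range' (Nat.lt_succ_of_le hd)]
  refine le_trans (Finset.abs_sum_le_sum_abs _ _) ?_
  rw [Finset.sum_mul]
  apply Finset.sum_le_sum
  intro i hi
  rw [abs_mul, abs_pow]
  apply mul_le_mul_of_nonneg_left _ (abs_nonneg _)
  calc |x| ^ i ≤ jb x ^ i := pow_le_pow_left₀ (abs_nonneg x) (abs_le_jb x) i
    _ ≤ jb x ^ d := pow_le_pow_right₀ (one_le_jb x) (by
        simp only [Finset.mem_range] at hi; omega)

lemma arsinh_ideriv_bound (m : ℕ) :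
    ∃ C > 0, ∀ x, |iteratedDeriv (m+1) Real.arsinh x| ≤ C * jb x ^ (-(m:ℝ) - 1) := by
  set S : ℝ := ∑ i ∈ Finset.range (m+1), |(ap m).coeff i| with hS
  refine ⟨S + 1, by positivity, fun x => ?_⟩
  have hpos : (0:ℝ) < 1 + x^2 := by positivity
  rw [arsinh_ideriv_eq, abs_mul, abs_of_pos (Real.rpow_pos_of_pos hpos _)]
  have h1 : |(ap m).eval x| ≤ S * jb x ^ (m:ℕ) := poly_eval_bound _ m (ap_natDegree m) x
  have h2 : jb x ^ (m:ℕ) * (1 + x^2) ^ (-(m:ℝ) - 1/2) = jb x ^ (-(m:ℝ) - 1) := by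
    rw [← Real.rpow_natCast (jb x) m, jb_rpow, jb_rpow, ← Real.rpow_add hpos]
    congr 1; ring
  calc |(ap m).eval x| * (1 + x^2) ^ (-(m:ℝ) - 1/2)
      ≤ S * jb x ^ (m:ℕ) * (1 + x^2) ^ (-(m:ℝ) - 1/2) := by
        apply mul_le_mul_of_nonneg_right h1 (le_of_lt (Real.rpow_pos_of_pos hpos _))
    _ = S * jb x ^ (-(m:ℝ) - 1) := by rw [mul_assoc, h2]
    _ ≤ (S + 1) * jb x ^ (-(m:ℝ) - 1) := by
        apply mul_le_mul_of_nonneg_right (by linarith) (le_of_lt (Real.rpow_pos_of_pos (jb_pos x) _))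



lemma cd_diff {f : ℝ → ℝ} (hf : ContDiff ℝ (⊤:ℕ∞) f) : Differentiable ℝ f :=
  hf.differentiable (by simp)

lemma cd_deriv {f : ℝ → ℝ} (hf : ContDiff ℝ (⊤:ℕ∞) f) : ContDiff ℝ (⊤:ℕ∞) (deriv f) :=
  (contDiff_infty_iff_deriv.mp hf).2

def emA : ℕ → ℕ → ℝ → ℝ
  | 0, 0, _ => 1
  | 0, _+1, _ => 0
  | m+1, 0, x => deriv (emA m 0) x
  | m+1, i+1, x => deriv (emA m (i+1)) x + deriv Real.arsinh x * emA m i x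

lemma contDiff_deriv_arsinh : ContDiff ℝ (⊤:ℕ∞) (deriv Real.arsinh) :=
  cd_deriv Real.contDiff_arsinh

lemma emA_contDiff : ∀ m i, ContDiff ℝ (⊤:ℕ∞) (emA m i) := by
  intro m
  induction m with
  | zero => intro i; cases i with
    | zero => exact contDiff_const
    | succ j => exact contDiff_const
  | succ m ih =>
    intro i; cases i with
    | zero => exact cd_deriv (ih 0)
    | succ j =>
      exact (cd_deriv (ih (j+1))).add (contDiff_deriv_arsinh.mul (ih j))

lemma emA_zero : ∀ m i, m < i → emA m i = fun _ => 0 := by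
  intro m
  induction m with
  | zero => intro i hi
            match i, hi with
            | j+1, _ => rfl
  | succ m ih =>
    intro i hi
    match i, hi with
    | j+1, hi =>
      have h1 : emA m (j+1) = fun _ => 0 := ih (j+1) (by omega)
      have h2 : emA m j = fun _ => 0 := ih j (by omega)
      funext x
      show deriv (emA m (j+1)) x + deriv Real.arsinh x * emA m j x = 0
      rw [h1, h2, deriv_const]
      simp

lemma emA_expand (t : ℝ) : ∀ (m : ℕ) (x : ℝ),
    iteratedDeriv m (fun x' => Real.exp (t * Real.arsinh x')) x
      = ∑ i ∈ Finset.range (m+1), t^i * emA m i x * Real.exp (t * Real.arsinh x) := by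
  intro m
  induction m with
  | zero => intro x; simp [emA]
  | succ m ih =>
    intro x
    rw [iteratedDeriv_succ]
    have hfun : iteratedDeriv m (fun x' => Real.exp (t * Real.arsinh x'))
        = fun y => ∑ i ∈ Finset.range (m+1), t^i * emA m i y * Real.exp (t * Real.arsinh y) :=
      funext fun y => ih y
    rw [hfun]
    set D := deriv Real.arsinh x with hD
    set E := Real.exp (t * Real.arsinh x) with hE
    have hA : HasDerivAt Real.arsinh D x :=
      (Real.differentiable_arsinh x).hasDerivAt
    have hExp : HasDerivAt (fun y => Real.exp (t * Real.arsinh y)) (E * (t * D)) x :=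
      (hA.const_mul t).exp
    have hterm : ∀ i ∈ Finset.range (m+1),
        HasDerivAt (fun y => t^i * emA m i y * Real.exp (t * Real.arsinh y))
          ((t^i * deriv (emA m i) x) * E + (t^i * emA m i x) * (E * (t * D))) x := by
      intro i _
      have hEM : HasDerivAt (emA m i) (deriv (emA m i) x) x :=
        (cd_diff (emA_contDiff m i) x).hasDerivAt
      have := ((hEM.const_mul (t^i)).fun_mul hExp)
      convert this using 1
    have hsum := HasDerivAt.fun_sum hterm
    rw [hsum.deriv]
    -- now pure algebra
    have step1 : ∀ i ∈ Finset.range (m+1),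
        (t^i * deriv (emA m i) x) * E + (t^i * emA m i x) * (E * (t * D))
          = t^i * deriv (emA m i) x * E + t^(i+1) * (D * emA m i x) * E := by
      intro i _; ring
    rw [Finset.sum_congr rfl step1, Finset.sum_add_distrib]
    -- RHS
    rw [Finset.sum_range_succ' (fun i => t^i * emA (m+1) i x * E) (m+1)]
    have hrhs : ∀ i ∈ Finset.range (m+1), t^(i+1) * emA (m+1) (i+1) x * E
        = t^(i+1) * deriv (emA m (i+1)) x * E + t^(i+1) * (D * emA m i x) * E := by
      intro i _
      show t^(i+1) * (deriv (emA m (i+1)) x + D * emA m i x) * E = _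
      ring
    rw [Finset.sum_congr rfl hrhs, Finset.sum_add_distrib]
    have hzero : emA (m+1) 0 x = deriv (emA m 0) x := rfl
    rw [hzero]
    -- first sums
    have lhs1 : ∑ i ∈ Finset.range (m+1), t^i * deriv (emA m i) x * E
        = ∑ i ∈ Finset.range m, t^(i+1) * deriv (emA m (i+1)) x * E
          + t^0 * deriv (emA m 0) x * E :=
      Finset.sum_range_succ' _ m
    have rhs1 : ∑ i ∈ Finset.range (m+1), t^(i+1) * deriv (emA m (i+1)) x * E
        = ∑ i ∈ Finset.range m, t^(i+1) * deriv (emA m (i+1)) x * E := by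
      rw [Finset.sum_range_succ]
      have : emA m (m+1) = fun _ => 0 := emA_zero m (m+1) (by omega)
      rw [this, deriv_const]
      simp
    rw [lhs1, rhs1]
    ring

lemma rpow_exp_shift (x : ℝ) (m j : ℕ) :
    jb x ^ (-(m:ℝ) - ((j:ℝ)+1)) = jb x ^ (-((m:ℝ)+1) - j) := by
  congr 1; ring

lemma emA_bound : ∀ m i j : ℕ, ∃ C > 0, ∀ x : ℝ,
    |iteratedDeriv j (emA m i) x| ≤ C * jb x ^ (-(m:ℝ) - j) := by
  intro m
  induction m with
  | zero =>
    intro i j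
    refine ⟨1, one_pos, fun x => ?_⟩
    cases i with
    | zero =>
      show |iteratedDeriv j (fun _ => (1:ℝ)) x| ≤ _
      rw [iteratedDeriv_const']
      rcases Nat.eq_zero_or_pos j with rfl | hj
      · norm_num
      · rw [if_neg (by omega), abs_zero, one_mul]
        exact le_of_lt (Real.rpow_pos_of_pos (jb_pos x) _)
    | succ i =>
      show |iteratedDeriv j (fun _ => (0:ℝ)) x| ≤ _
      rw [iteratedDeriv_const', ite_self, abs_zero, one_mul]
      exact le_of_lt (Real.rpow_pos_of_pos (jb_pos x) _)
  | succ m ih =>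
    obtain ⟨Cf, hCfpos, hCf⟩ : ∃ Cf : ℕ → ℕ → ℝ, (∀ i j, 0 < Cf i j) ∧
        ∀ i j x, |iteratedDeriv j (emA m i) x| ≤ Cf i j * jb x ^ (-(m:ℝ) - j) := by
      choose Cf h1 h2 using ih
      exact ⟨Cf, h1, h2⟩
    obtain ⟨A, hApos, hA⟩ : ∃ A : ℕ → ℝ, (∀ l, 0 < A l) ∧
        ∀ l x, |iteratedDeriv (l+1) Real.arsinh x| ≤ A l * jb x ^ (-(l:ℝ) - 1) := by
      choose A h1 h2 using arsinh_ideriv_bound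
      exact ⟨A, h1, h2⟩
    intro i j
    have hexp : (-(m:ℝ) - ((j+1:ℕ):ℝ)) = (-(((m+1:ℕ)):ℝ) - (j:ℝ)) := by push_cast; ring
    cases i with
    | zero =>
      refine ⟨Cf 0 (j+1), hCfpos 0 (j+1), fun x => ?_⟩
      show |iteratedDeriv j (fun y => deriv (emA m 0) y) x| ≤ _
      have h0 : (fun y => deriv (emA m 0) y) = deriv (emA m 0) := rfl
      rw [h0, ← iteratedDeriv_succ']
      calc |iteratedDeriv (j+1) (emA m 0) x|
          ≤ Cf 0 (j+1) * jb x ^ (-(m:ℝ) - ((j+1:ℕ):ℝ)) := hCf 0 (j+1) x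
        _ = Cf 0 (j+1) * jb x ^ (-(((m+1:ℕ)):ℝ) - (j:ℝ)) := by rw [hexp]
    | succ i =>
      set S : ℝ := ∑ l ∈ Finset.range (j+1), (j.choose l : ℝ) * A l * Cf i (j - l) with hSdef
      have hS0 : 0 ≤ S := by
        apply Finset.sum_nonneg; intro l _
        have h1 := (hApos l).le; have h2 := (hCfpos i (j-l)).le
        have hc : (0:ℝ) ≤ (j.choose l : ℝ) := Nat.cast_nonneg _
        positivity
      refine ⟨Cf (i+1) (j+1) + S, by linarith [hCfpos (i+1) (j+1)], fun x => ?_⟩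
      have hjbpow : 0 < jb x ^ (-(((m+1:ℕ)):ℝ) - (j:ℝ)) := Real.rpow_pos_of_pos (jb_pos x) _
      show |iteratedDeriv j
        (fun y => deriv (emA m (i+1)) y + deriv Real.arsinh y * emA m i y) x| ≤ _
      rw [iteratedDeriv_add' (cd_deriv (emA_contDiff m (i+1)))
        (contDiff_deriv_arsinh.mul (emA_contDiff m i))]
      have hb1 : |iteratedDeriv j (deriv (emA m (i+1))) x|
          ≤ Cf (i+1) (j+1) * jb x ^ (-(((m+1:ℕ)):ℝ) - (j:ℝ)) := by
        rw [← iteratedDeriv_succ', ← hexp]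
        exact hCf (i+1) (j+1) x
      have hb2 : |iteratedDeriv j (fun y => deriv Real.arsinh y * emA m i y) x|
          ≤ S * jb x ^ (-(((m+1:ℕ)):ℝ) - (j:ℝ)) := by
        refine le_trans (abs_iteratedDeriv_mul_le contDiff_deriv_arsinh (emA_contDiff m i) j x) ?_
        rw [hSdef, Finset.sum_mul]
        apply Finset.sum_le_sum
        intro l hl
        have hlj : l ≤ j := by simp only [Finset.mem_range] at hl; omega
        have hA' : |iteratedDeriv l (deriv Real.arsinh) x| ≤ A l * jb x ^ (-(l:ℝ) - 1) := by
          rw [← iteratedDeriv_succ']; exact hA l x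
        have hC' := hCf i (j-l) x
        have hmul : jb x ^ (-(l:ℝ) - 1) * jb x ^ (-(m:ℝ) - ((j-l:ℕ):ℝ))
            = jb x ^ (-(((m+1:ℕ)):ℝ) - (j:ℝ)) := by
          rw [← Real.rpow_add (jb_pos x)]
          congr 1
          rw [Nat.cast_sub hlj]
          push_cast; ring
        calc (j.choose l : ℝ) * |iteratedDeriv l (deriv Real.arsinh) x|
              * |iteratedDeriv (j-l) (emA m i) x|
            ≤ (j.choose l : ℝ) * (A l * jb x ^ (-(l:ℝ) - 1))
              * (Cf i (j-l) * jb x ^ (-(m:ℝ) - ((j-l:ℕ):ℝ))) := by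
              apply mul_le_mul
              · exact mul_le_mul_of_nonneg_left hA' (Nat.cast_nonneg _)
              · exact hC'
              · exact abs_nonneg _
              · have := (hApos l).le
                have h0 : (0:ℝ) ≤ (j.choose l : ℝ) := Nat.cast_nonneg _
                have := (Real.rpow_pos_of_pos (jb_pos x) (-(l:ℝ) - 1)).le
                positivity
          _ = (j.choose l : ℝ) * A l * Cf i (j-l)
              * (jb x ^ (-(l:ℝ) - 1) * jb x ^ (-(m:ℝ) - ((j-l:ℕ):ℝ))) := by ring
          _ = (j.choose l : ℝ) * A l * Cf i (j-l) * jb x ^ (-(((m+1:ℕ)):ℝ) - (j:ℝ)) := by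
              rw [hmul]
      refine le_trans (abs_add_le _ _) ?_
      calc |iteratedDeriv j (deriv (emA m (i+1))) x|
            + |iteratedDeriv j (fun y => deriv Real.arsinh y * emA m i y) x|
          ≤ Cf (i+1) (j+1) * jb x ^ (-(((m+1:ℕ)):ℝ) - (j:ℝ))
            + S * jb x ^ (-(((m+1:ℕ)):ℝ) - (j:ℝ)) := add_le_add hb1 hb2
        _ = (Cf (i+1) (j+1) + S) * jb x ^ (-(((m+1:ℕ)):ℝ) - (j:ℝ)) := by ring

def chiE (R h : ℝ) : ℝ → ℝ := Set.indicator {ζ : ℝ | h ≤ |ζ| ∧ |ζ| ≤ h * R} (fun _ => 1)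

lemma chiE_nonneg (R h ξ : ℝ) : 0 ≤ chiE R h ξ := by
  unfold chiE
  rcases Set.indicator_eq_zero_or_self {ζ : ℝ | h ≤ |ζ| ∧ |ζ| ≤ h * R} (fun _ => (1:ℝ)) ξ with h1 | h1 <;>
    rw [h1] <;> norm_num

lemma chiE_le_one (R h ξ : ℝ) : chiE R h ξ ≤ 1 := by
  unfold chiE
  rcases Set.indicator_eq_zero_or_self {ζ : ℝ | h ≤ |ζ| ∧ |ζ| ≤ h * R} (fun _ => (1:ℝ)) ξ with h1 | h1 <;>
    rw [h1] <;> norm_num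

section omegaSec

variable {R : ℝ} {ω : ℝ → ℝ}

lemma omega_ideriv_vanish (hω : ContDiff ℝ (⊤:ℕ∞) ω)
    (hω0 : ∀ ξ : ℝ, |ξ| ≤ 1 → ω ξ = 0)
    (hωcp : ∀ ξ₁ ξ₂ : ℝ, R ≤ ξ₁ → R ≤ ξ₂ → ω ξ₁ = ω ξ₂)
    (hωcm : ∀ ξ₁ ξ₂ : ℝ, ξ₁ ≤ -R → ξ₂ ≤ -R → ω ξ₁ = ω ξ₂)
    (a : ℕ) (ha : 1 ≤ a) {ζ : ℝ} (hζ : |ζ| < 1 ∨ R < |ζ|) :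
    iteratedDeriv a ω ζ = 0 := by
  have hconst : ∀ c : ℝ, iteratedDeriv a (fun _ : ℝ => c) ζ = 0 := by
    intro c; rw [iteratedDeriv_const', if_neg (by omega)]
  rcases hζ with h1 | h2
  · have hev : ω =ᶠ[nhds ζ] (fun _ => 0) := by
      have hopen : IsOpen {z : ℝ | |z| < 1} := isOpen_lt (continuous_abs) continuous_const
      filter_upwards [hopen.mem_nhds h1] with z hz
      exact hω0 z (le_of_lt hz)
    rw [hev.iteratedDeriv_eq a, hconst]
  · rcases le_or_gt 0 ζ with hpos | hneg
    · have hRζ : R < ζ := by rwa [abs_of_nonneg hpos] at h2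
      have hev : ω =ᶠ[nhds ζ] (fun _ => ω R) := by
        have hopen : IsOpen {z : ℝ | R < z} := isOpen_lt continuous_const continuous_id
        filter_upwards [hopen.mem_nhds hRζ] with z hz
        exact hωcp z R (le_of_lt hz) le_rfl
      rw [hev.iteratedDeriv_eq a, hconst]
    · have hRζ : ζ < -R := by
        rw [abs_of_neg hneg] at h2; linarith
      have hev : ω =ᶠ[nhds ζ] (fun _ => ω (-R)) := by
        have hopen : IsOpen {z : ℝ | z < -R} := isOpen_lt continuous_id continuous_const
        filter_upwards [hopen.mem_nhds hRζ] with z hz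
        exact hωcm z (-R) (le_of_lt hz) le_rfl
      rw [hev.iteratedDeriv_eq a, hconst]

lemma omega_ideriv_bound (hω : ContDiff ℝ (⊤:ℕ∞) ω) (hR : 1 < R)
    (hω0 : ∀ ξ : ℝ, |ξ| ≤ 1 → ω ξ = 0)
    (hωcp : ∀ ξ₁ ξ₂ : ℝ, R ≤ ξ₁ → R ≤ ξ₂ → ω ξ₁ = ω ξ₂)
    (hωcm : ∀ ξ₁ ξ₂ : ℝ, ξ₁ ≤ -R → ξ₂ ≤ -R → ω ξ₁ = ω ξ₂)
    (a : ℕ) (ha : 1 ≤ a) :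
    ∃ K > 0, ∀ ζ : ℝ, |iteratedDeriv a ω ζ| ≤ K := by
  have hc : Continuous (iteratedDeriv a ω) :=
    hω.continuous_iteratedDeriv a (by exact_mod_cast le_top)
  obtain ⟨K, hK⟩ := (isCompact_Icc (a := -R) (b := R)).exists_bound_of_continuousOn
    hc.continuousOn
  refine ⟨K + 1, ?_, fun ζ => ?_⟩
  · have h0 : ‖iteratedDeriv a ω 0‖ ≤ K := hK 0 (by constructor <;> linarith)
    have := norm_nonneg (iteratedDeriv a ω 0)
    linarith
  · rcases le_or_gt |ζ| R with h1 | h2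
    · have := hK ζ (abs_le.mp h1)
      rw [Real.norm_eq_abs] at this
      linarith
    · rw [omega_ideriv_vanish hω hω0 hωcp hωcm a ha (Or.inr h2)]
      simp only [abs_zero]
      linarith [hK 0 (by constructor <;> linarith), norm_nonneg (iteratedDeriv a ω 0)]

lemma jbh_le (hR : 1 < R) {h ξ : ℝ} (hh : 1 ≤ h) (hξ : |ξ| ≤ h * R) :
    jbh h ξ ≤ h * Real.sqrt (1 + R^2) := by
  rw [jbh, show h * Real.sqrt (1+R^2) = Real.sqrt (h^2 * (1+R^2)) by
    rw [Real.sqrt_mul (by positivity), Real.sqrt_sq (by linarith)]]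
  apply Real.sqrt_le_sqrt
  have h1 : ξ^2 ≤ (h*R)^2 := by
    rw [← sq_abs ξ]
    apply sq_le_sq' <;> [linarith [abs_nonneg ξ, neg_abs_le ξ]; exact hξ]
  nlinarith

lemma scaled_bound_aux (hω : ContDiff ℝ (⊤:ℕ∞) ω) (hR : 1 < R)
    (hω0 : ∀ ξ : ℝ, |ξ| ≤ 1 → ω ξ = 0)
    (hωcp : ∀ ξ₁ ξ₂ : ℝ, R ≤ ξ₁ → R ≤ ξ₂ → ω ξ₁ = ω ξ₂)
    (hωcm : ∀ ξ₁ ξ₂ : ℝ, ξ₁ ≤ -R → ξ₂ ≤ -R → ω ξ₁ = ω ξ₂)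
    (a : ℕ) (ha : 1 ≤ a) :
    ∃ K > 0, ∀ h : ℝ, 1 ≤ h → ∀ ξ : ℝ,
      (h⁻¹)^a * |iteratedDeriv a ω (ξ / h)| ≤ K * chiE R h ξ * jbh h ξ ^ (-(a:ℝ)) := by
  obtain ⟨K0, hK0pos, hK0⟩ := omega_ideriv_bound hω hR hω0 hωcp hωcm a ha
  set Q : ℝ := Real.sqrt (1 + R^2) with hQ
  have hQ1 : 1 ≤ Q := by
    rw [hQ]
    have := Real.sqrt_le_sqrt (show (1:ℝ) ≤ 1 + R^2 by nlinarith)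
    simpa using this
  refine ⟨K0 * Q^a, by positivity, fun h hh ξ => ?_⟩
  have hhpos : (0:ℝ) < h := by linarith
  have hjbhpos := jbh_pos hh ξ
  by_cases hmem : ξ ∈ {ζ : ℝ | h ≤ |ζ| ∧ |ζ| ≤ h * R}
  · have hchi : chiE R h ξ = 1 := Set.indicator_of_mem hmem _
    rw [hchi, mul_one]
    have hjbh : jbh h ξ ≤ h * Q := jbh_le hR hh hmem.2
    have hkey : h⁻¹ ≤ Q * (jbh h ξ)⁻¹ := by
      rw [← div_eq_mul_inv, le_div_iff₀ hjbhpos, inv_mul_le_iff₀ hhpos]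
      exact hjbh
    have hpow : (h⁻¹)^a ≤ Q^a * ((jbh h ξ)⁻¹)^a := by
      calc (h⁻¹)^a ≤ (Q * (jbh h ξ)⁻¹)^a :=
            pow_le_pow_left₀ (by positivity) hkey a
        _ = Q^a * ((jbh h ξ)⁻¹)^a := mul_pow _ _ _
    have hrpow : ((jbh h ξ)⁻¹)^a = jbh h ξ ^ (-(a:ℝ)) := by
      rw [Real.rpow_neg hjbhpos.le, Real.rpow_natCast, inv_pow]
    calc (h⁻¹)^a * |iteratedDeriv a ω (ξ/h)| ≤ (h⁻¹)^a * K0 := by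
          apply mul_le_mul_of_nonneg_left (hK0 _) (by positivity)
      _ ≤ Q^a * ((jbh h ξ)⁻¹)^a * K0 := by
          apply mul_le_mul_of_nonneg_right hpow hK0pos.le
      _ = K0 * Q^a * jbh h ξ ^ (-(a:ℝ)) := by rw [hrpow]; ring
  · have hchi : chiE R h ξ = 0 := Set.indicator_of_notMem hmem _
    rw [hchi]
    have hvan : iteratedDeriv a ω (ξ / h) = 0 := by
      apply omega_ideriv_vanish hω hω0 hωcp hωcm a ha
      simp only [Set.mem_setOf_eq, not_and, not_le] at hmem
      rw [abs_div, abs_of_pos hhpos]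
      rcases le_or_gt h |ξ| with hc1 | hc1
      · right
        have h2 := hmem hc1
        rw [lt_div_iff₀ hhpos]
        linarith
      · left
        rw [div_lt_one hhpos]
        linarith
    rw [hvan]
    simp

end omegaSec

lemma chiE_cases (R h ξ : ℝ) : chiE R h ξ = 0 ∨ chiE R h ξ = 1 := by
  unfold chiE
  rcases Set.indicator_eq_zero_or_self {ζ : ℝ | h ≤ |ζ| ∧ |ζ| ≤ h * R} (fun _ => (1:ℝ)) ξ with h1 | h1 <;>
    rw [h1] <;> simp

lemma arsinh_chi (R h x ξ : ℝ) :
    |Real.arsinh x| * chiE R h ξ ≤ 1 + Real.log (jb x) * chiE R h ξ := by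
  rcases chiE_cases R h ξ with h1 | h1 <;> rw [h1]
  · norm_num
  · rw [mul_one, mul_one]
    have := abs_arsinh_le x
    have hlog2 : Real.log 2 ≤ 1 := by
      have := Real.log_le_sub_one_of_pos (show (0:ℝ) < 2 by norm_num)
      linarith
    linarith

lemma one_le_base (R h x ξ : ℝ) : 1 ≤ 1 + Real.log (jb x) * chiE R h ξ := by
  have h1 := log_jb_nonneg x
  have h2 := chiE_nonneg R h ξ
  nlinarith

section expBound

variable {M R : ℝ} {ω : ℝ → ℝ}

lemma exp_xi_bound (hM : 0 < M) (hω : ContDiff ℝ (⊤:ℕ∞) ω) (hR : 1 < R)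
    (hω0 : ∀ ξ : ℝ, |ξ| ≤ 1 → ω ξ = 0)
    (hωcp : ∀ ξ₁ ξ₂ : ℝ, R ≤ ξ₁ → R ≤ ξ₂ → ω ξ₁ = ω ξ₂)
    (hωcm : ∀ ξ₁ ξ₂ : ℝ, ξ₁ ≤ -R → ξ₂ ≤ -R → ω ξ₁ = ω ξ₂) :
    ∀ n : ℕ, ∃ K > 0, ∀ m : ℕ, m ≤ n → ∀ h : ℝ, 1 ≤ h → ∀ s : ℝ, s = 1 ∨ s = -1 →
      ∀ x ξ : ℝ,
      |iteratedDeriv m (fun ζ => Real.exp (s * M * ω (ζ / h) * Real.arsinh x)) ξ|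
        ≤ K * (1 + Real.log (jb x) * chiE R h ξ) ^ m * jbh h ξ ^ (-(m:ℝ))
            * Real.exp (s * M * ω (ξ / h) * Real.arsinh x) := by
  intro n
  induction n with
  | zero =>
    refine ⟨1, one_pos, fun m hm h hh s hs x ξ => ?_⟩
    have : m = 0 := Nat.le_zero.mp hm
    subst this
    simp only [iteratedDeriv_zero, pow_zero, Nat.cast_zero, neg_zero, Real.rpow_zero,
      mul_one, one_mul]
    rw [abs_of_pos (Real.exp_pos _)]
  | succ n ih =>
    obtain ⟨K, hKpos, hK⟩ := ih
    have hsc : ∀ a : ℕ, ∃ Ka > 0, ∀ h : ℝ, 1 ≤ h → ∀ ξ : ℝ,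
        (h⁻¹)^(a+1) * |iteratedDeriv (a+1) ω (ξ / h)| ≤
          Ka * chiE R h ξ * jbh h ξ ^ (-((a+1:ℕ):ℝ)) :=
      fun a => scaled_bound_aux hω hR hω0 hωcp hωcm (a+1) (by omega)
    choose Kc hKcpos hKc using hsc
    set S : ℝ := ∑ a ∈ Finset.range (n+1), (n.choose a : ℝ) * M * Kc a * K with hSdef
    have hS0 : 0 ≤ S := by
      apply Finset.sum_nonneg; intro a _
      have := (hKcpos a).le
      have hc : (0:ℝ) ≤ (n.choose a : ℝ) := Nat.cast_nonneg _
      positivity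
    refine ⟨K + S, by linarith, fun m hm h hh s hs x ξ => ?_⟩
    set A := Real.arsinh x with hA
    set L := Real.log (jb x) with hL
    set χ := chiE R h ξ with hχ
    set V := Real.exp (s * M * ω (ξ / h) * A) with hV
    have hhpos : (0:ℝ) < h := by linarith
    have hjbh := jbh_pos hh ξ
    have hVpos : 0 < V := Real.exp_pos _
    have hbase : 1 ≤ 1 + L * χ := one_le_base R h x ξ
    have hstuff : ∀ k : ℕ, 0 < (1 + L * χ) ^ k * jbh h ξ ^ (-(k:ℝ)) * V := by
      intro k
      have := Real.rpow_pos_of_pos hjbh (-(k:ℝ))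
      positivity
    rcases Nat.lt_or_ge m (n+1) with hmn | hmn
    · -- m ≤ n : use IH directly
      calc |iteratedDeriv m (fun ζ => Real.exp (s * M * ω (ζ / h) * A)) ξ|
          ≤ K * (1 + L * χ) ^ m * jbh h ξ ^ (-(m:ℝ)) * V :=
            hK m (by omega) h hh s hs x ξ
        _ ≤ (K + S) * (1 + L * χ) ^ m * jbh h ξ ^ (-(m:ℝ)) * V := by
            have := hstuff m
            nlinarith [hstuff m]
    · have hm1 : m = n + 1 := by omega
      subst hm1
      -- the derivative recursion
      set u : ℝ → ℝ := fun ζ => (s * M * A * h⁻¹) * deriv ω (ζ / h) with hu_def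
      set v : ℝ → ℝ := fun ζ => Real.exp (s * M * ω (ζ / h) * A) with hv_def
      have hωh : ContDiff ℝ (⊤:ℕ∞) (fun ζ : ℝ => ω (ζ / h)) :=
        hω.comp (contDiff_id.div_const h)
      have hdωh : ContDiff ℝ (⊤:ℕ∞) (fun ζ : ℝ => deriv ω (ζ / h)) :=
        (cd_deriv hω).comp (contDiff_id.div_const h)
      have hu : ContDiff ℝ (⊤:ℕ∞) u := contDiff_const.mul hdωh
      have hv : ContDiff ℝ (⊤:ℕ∞) v :=
        ((contDiff_const.mul hωh).mul contDiff_const).exp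
      have hderiv : deriv (fun ζ => Real.exp (s * M * ω (ζ / h) * A))
          = fun ζ => u ζ * v ζ := by
        funext ζ
        have hq : HasDerivAt (fun z : ℝ => z / h) (1 / h) ζ := by
          simpa using (hasDerivAt_id ζ).div_const h
        have hw : HasDerivAt ω (deriv ω (ζ / h)) (ζ / h) :=
          (cd_diff hω (ζ / h)).hasDerivAt
        have hcomp : HasDerivAt (fun z => ω (z / h)) (deriv ω (ζ / h) * (1 / h)) ζ :=
          hw.comp ζ hq
        have hlin : HasDerivAt (fun z => s * M * ω (z / h) * A)
            ((s * M) * (deriv ω (ζ / h) * (1 / h)) * A) ζ :=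
          (hcomp.const_mul (s * M)).mul_const A
        have hexp := hlin.exp
        rw [hexp.deriv]
        show Real.exp (s * M * ω (ζ/h) * A) * (s * M * (deriv ω (ζ/h) * (1/h)) * A)
          = (s * M * A * h⁻¹) * deriv ω (ζ/h) * Real.exp (s * M * ω (ζ/h) * A)
        rw [one_div]
        ring
      rw [iteratedDeriv_succ', hderiv]
      have hleib := abs_iteratedDeriv_mul_le hu hv n ξ
      refine le_trans hleib ?_
      have habs_s : |s| = 1 := by rcases hs with rfl | rfl <;> norm_num
      have hterm : ∀ a ∈ Finset.range (n+1),
          (n.choose a : ℝ) * |iteratedDeriv a u ξ| * |iteratedDeriv (n-a) v ξ|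
            ≤ (n.choose a : ℝ) * M * Kc a * K
              * ((1 + L * χ) ^ (n+1) * jbh h ξ ^ (-((n+1:ℕ):ℝ)) * V) := by
        intro a ha
        have haln : a ≤ n := by simp only [Finset.mem_range] at ha; omega
        -- bound on iteratedDeriv a u
        have e3 : iteratedDeriv a (fun ζ : ℝ => deriv ω (ζ / h)) ξ
            = (h⁻¹)^a * iteratedDeriv a (deriv ω) (h⁻¹ * ξ) := by
          have e2 : (fun ζ : ℝ => deriv ω (ζ / h)) = fun ζ => (deriv ω) (h⁻¹ * ζ) := by
            funext ζ; rw [div_eq_inv_mul]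
          rw [e2, iteratedDeriv_comp_const_mul ((cd_deriv hω).of_le (m := (a : WithTop ℕ∞)) (by exact_mod_cast le_top)) h⁻¹]
        have e1 : iteratedDeriv a u ξ
            = (s * M * A * h⁻¹) * ((h⁻¹)^a * iteratedDeriv (a+1) ω (ξ / h)) := by
          rw [hu_def, iteratedDeriv_cmul hdωh, e3, ← iteratedDeriv_succ', ← div_eq_inv_mul]
        have hubound : |iteratedDeriv a u ξ|
            ≤ M * Kc a * ((1 + L * χ) * jbh h ξ ^ (-((a+1:ℕ):ℝ))) := by
          rw [e1]
          have : |(s * M * A * h⁻¹) * ((h⁻¹)^a * iteratedDeriv (a+1) ω (ξ / h))|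
              = M * |A| * ((h⁻¹)^(a+1) * |iteratedDeriv (a+1) ω (ξ / h)|) := by
            simp only [abs_mul, abs_pow, habs_s, abs_of_pos (inv_pos.mpr hhpos),
              abs_of_pos hM]
            ring
          rw [this]
          calc M * |A| * ((h⁻¹)^(a+1) * |iteratedDeriv (a+1) ω (ξ / h)|)
              ≤ M * |A| * (Kc a * χ * jbh h ξ ^ (-((a+1:ℕ):ℝ))) := by
                apply mul_le_mul_of_nonneg_left (hKc a h hh ξ) (by positivity)
            _ = M * Kc a * ((|A| * χ) * jbh h ξ ^ (-((a+1:ℕ):ℝ))) := by ring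
            _ ≤ M * Kc a * ((1 + L * χ) * jbh h ξ ^ (-((a+1:ℕ):ℝ))) := by
                apply mul_le_mul_of_nonneg_left _ (mul_nonneg hM.le (hKcpos a).le)
                apply mul_le_mul_of_nonneg_right (arsinh_chi R h x ξ)
                  (Real.rpow_pos_of_pos hjbh _).le
        have hvbound : |iteratedDeriv (n-a) v ξ|
            ≤ K * (1 + L * χ) ^ (n-a) * jbh h ξ ^ (-((n-a:ℕ):ℝ)) * V :=
          hK (n-a) (by omega) h hh s hs x ξ
        calc (n.choose a : ℝ) * |iteratedDeriv a u ξ| * |iteratedDeriv (n-a) v ξ|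
            ≤ (n.choose a : ℝ) * (M * Kc a * ((1 + L * χ) * jbh h ξ ^ (-((a+1:ℕ):ℝ))))
              * (K * (1 + L * χ) ^ (n-a) * jbh h ξ ^ (-((n-a:ℕ):ℝ)) * V) := by
              apply mul_le_mul
              · exact mul_le_mul_of_nonneg_left hubound (Nat.cast_nonneg _)
              · exact hvbound
              · exact abs_nonneg _
              · have h1 := (hKcpos a).le
                have h2 := (Real.rpow_pos_of_pos hjbh (-((a+1:ℕ):ℝ))).le
                have h3 : (0:ℝ) ≤ (n.choose a : ℝ) := Nat.cast_nonneg _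
                have h4 : (0:ℝ) ≤ 1 + L * χ := by linarith
                positivity
          _ = (n.choose a : ℝ) * M * Kc a * K * ((1 + L * χ) ^ (n-a+1)
              * (jbh h ξ ^ (-((a+1:ℕ):ℝ)) * jbh h ξ ^ (-((n-a:ℕ):ℝ))) * V) := by
              rw [pow_succ]
              ring
          _ = (n.choose a : ℝ) * M * Kc a * K * ((1 + L * χ) ^ (n-a+1)
              * jbh h ξ ^ (-((n+1:ℕ):ℝ)) * V) := by
              rw [← Real.rpow_add hjbh]
              congr 3
              rw [Nat.cast_sub haln]
              push_cast; ring
          _ ≤ (n.choose a : ℝ) * M * Kc a * K * ((1 + L * χ) ^ (n+1)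
              * jbh h ξ ^ (-((n+1:ℕ):ℝ)) * V) := by
              apply mul_le_mul_of_nonneg_left _ (by
                have := (hKcpos a).le
                have h3 : (0:ℝ) ≤ (n.choose a : ℝ) := Nat.cast_nonneg _
                positivity)
              apply mul_le_mul_of_nonneg_right _ hVpos.le
              apply mul_le_mul_of_nonneg_right _ (Real.rpow_pos_of_pos hjbh _).le
              exact pow_le_pow_right₀ hbase (by omega)
      calc ∑ a ∈ Finset.range (n+1),
            (n.choose a : ℝ) * |iteratedDeriv a u ξ| * |iteratedDeriv (n-a) v ξ|
          ≤ ∑ a ∈ Finset.range (n+1), (n.choose a : ℝ) * M * Kc a * K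
              * ((1 + L * χ) ^ (n+1) * jbh h ξ ^ (-((n+1:ℕ):ℝ)) * V) :=
            Finset.sum_le_sum hterm
        _ = S * ((1 + L * χ) ^ (n+1) * jbh h ξ ^ (-((n+1:ℕ):ℝ)) * V) := by
            rw [hSdef, Finset.sum_mul]
        _ ≤ (K + S) * ((1 + L * χ) ^ (n+1) * jbh h ξ ^ (-((n+1:ℕ):ℝ)) * V) := by
            apply mul_le_mul_of_nonneg_right (by linarith) (hstuff (n+1)).le
        _ = (K + S) * (1 + L * χ) ^ (n+1) * jbh h ξ ^ (-((n+1:ℕ):ℝ)) * V := by ring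

end expBound

lemma choose_le_two_pow' {m j : ℕ} (hj : j ≤ m) : (m.choose j : ℝ) ≤ 2^m := by
  have h1 : m.choose j ≤ 2^m := by
    calc m.choose j ≤ ∑ i ∈ Finset.range (m+1), m.choose i :=
          Finset.single_le_sum (fun i _ => Nat.zero_le _) (Finset.mem_range.mpr (by omega))
      _ = 2^m := Nat.sum_range_choose m
  exact_mod_cast h1

section cpowBound

variable {M R : ℝ} {ω : ℝ → ℝ}

lemma c_deriv_bound (hM : 0 < M) (hω : ContDiff ℝ (⊤:ℕ∞) ω) (hR : 1 < R)
    (hωb : ∀ ξ : ℝ, |ω ξ| ≤ 1)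
    (hω0 : ∀ ξ : ℝ, |ξ| ≤ 1 → ω ξ = 0)
    (hωcp : ∀ ξ₁ ξ₂ : ℝ, R ≤ ξ₁ → R ≤ ξ₂ → ω ξ₁ = ω ξ₂)
    (hωcm : ∀ ξ₁ ξ₂ : ℝ, ξ₁ ≤ -R → ξ₂ ≤ -R → ω ξ₁ = ω ξ₂) :
    ∃ Kd : ℕ → ℝ, (∀ k, 0 < Kd k) ∧ ∀ k : ℕ, ∀ h : ℝ, 1 ≤ h → ∀ s : ℝ, s = 1 ∨ s = -1 →
      ∀ ξ : ℝ, |iteratedDeriv k (fun ζ => s * M * ω (ζ / h)) ξ|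
        ≤ Kd k * jbh h ξ ^ (-(k:ℝ)) := by
  have hsc : ∀ b : ℕ, ∃ Kb > 0, ∀ h : ℝ, 1 ≤ h → ∀ ξ : ℝ,
      (h⁻¹)^(b+1) * |iteratedDeriv (b+1) ω (ξ / h)| ≤
        Kb * chiE R h ξ * jbh h ξ ^ (-((b+1:ℕ):ℝ)) :=
    fun b => scaled_bound_aux hω hR hω0 hωcp hωcm (b+1) (by omega)
  choose Kc hKcpos hKc using hsc
  refine ⟨fun k => Nat.casesOn k M (fun b => M * Kc b), fun k => ?_, fun k h hh s hs ξ => ?_⟩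
  · cases k with
    | zero => exact hM
    | succ b => exact mul_pos hM (hKcpos b)
  · have hhpos : (0:ℝ) < h := by linarith
    have hjbh := jbh_pos hh ξ
    have habs_s : |s| = 1 := by rcases hs with rfl | rfl <;> norm_num
    cases k with
    | zero =>
      simp only [iteratedDeriv_zero, Nat.cast_zero, neg_zero, Real.rpow_zero, mul_one]
      calc |s * M * ω (ξ / h)| = M * |ω (ξ / h)| := by
            rw [abs_mul, abs_mul, habs_s, abs_of_pos hM, one_mul]
        _ ≤ M * 1 := mul_le_mul_of_nonneg_left (hωb _) hM.le
        _ = M := mul_one M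
    | succ b =>
      have hωh : ContDiff ℝ (⊤:ℕ∞) (fun ζ : ℝ => ω (ζ / h)) :=
        hω.comp (contDiff_id.div_const h)
      have e1 : iteratedDeriv (b+1) (fun ζ => s * M * ω (ζ / h)) ξ
          = (s * M) * ((h⁻¹)^(b+1) * iteratedDeriv (b+1) ω (ξ / h)) := by
        have e0 : (fun ζ : ℝ => s * M * ω (ζ / h)) = fun ζ => (s * M) * ω (ζ / h) := rfl
        rw [e0, iteratedDeriv_cmul hωh]
        congr 1
        have e2 : (fun ζ : ℝ => ω (ζ / h)) = fun ζ => ω (h⁻¹ * ζ) := by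
          funext ζ; rw [div_eq_inv_mul]
        rw [e2, iteratedDeriv_comp_const_mul (hω.of_le (m := ((b+1 : ℕ) : WithTop ℕ∞)) (by exact_mod_cast le_top)) h⁻¹]
        simp only [div_eq_inv_mul]
      rw [e1]
      have e3 : |(s * M) * ((h⁻¹)^(b+1) * iteratedDeriv (b+1) ω (ξ / h))|
          = M * ((h⁻¹)^(b+1) * |iteratedDeriv (b+1) ω (ξ / h)|) := by
        simp only [abs_mul, habs_s, abs_pow, abs_of_pos (inv_pos.mpr hhpos), abs_of_pos hM]
        ring
      rw [e3]
      calc M * ((h⁻¹)^(b+1) * |iteratedDeriv (b+1) ω (ξ / h)|)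
          ≤ M * (Kc b * chiE R h ξ * jbh h ξ ^ (-((b+1:ℕ):ℝ))) :=
            mul_le_mul_of_nonneg_left (hKc b h hh ξ) hM.le
        _ ≤ M * (Kc b * 1 * jbh h ξ ^ (-((b+1:ℕ):ℝ))) := by
            apply mul_le_mul_of_nonneg_left _ hM.le
            apply mul_le_mul_of_nonneg_right _ (Real.rpow_pos_of_pos hjbh _).le
            exact mul_le_mul_of_nonneg_left (chiE_le_one R h ξ) (hKcpos b).le
        _ = M * Kc b * jbh h ξ ^ (-((b+1:ℕ):ℝ)) := by ring

lemma cpow_bound (hM : 0 < M) (hω : ContDiff ℝ (⊤:ℕ∞) ω) (hR : 1 < R)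
    (hωb : ∀ ξ : ℝ, |ω ξ| ≤ 1)
    (hω0 : ∀ ξ : ℝ, |ξ| ≤ 1 → ω ξ = 0)
    (hωcp : ∀ ξ₁ ξ₂ : ℝ, R ≤ ξ₁ → R ≤ ξ₂ → ω ξ₁ = ω ξ₂)
    (hωcm : ∀ ξ₁ ξ₂ : ℝ, ξ₁ ≤ -R → ξ₂ ≤ -R → ω ξ₁ = ω ξ₂) (n : ℕ) :
    ∀ i : ℕ, ∃ K > 0, ∀ m : ℕ, m ≤ n → ∀ h : ℝ, 1 ≤ h → ∀ s : ℝ, s = 1 ∨ s = -1 →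
      ∀ ξ : ℝ, |iteratedDeriv m (fun ζ => (s * M * ω (ζ / h))^i) ξ|
        ≤ K * jbh h ξ ^ (-(m:ℝ)) := by
  obtain ⟨Kd, hKdpos, hKd⟩ := c_deriv_bound hM hω hR hωb hω0 hωcp hωcm
  set D : ℝ := ∑ b ∈ Finset.range (n+1), Kd b with hDdef
  have hDle : ∀ k ≤ n, Kd k ≤ D := fun k hk =>
    Finset.single_le_sum (fun b _ => (hKdpos b).le) (Finset.mem_range.mpr (by omega))
  have hD0 : 0 < D := by
    apply Finset.sum_pos (fun b _ => hKdpos b)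
    exact ⟨0, Finset.mem_range.mpr (by omega)⟩
  intro i
  induction i with
  | zero =>
    refine ⟨1, one_pos, fun m hm h hh s hs ξ => ?_⟩
    have hjbh := jbh_pos hh ξ
    simp only [pow_zero]
    rw [iteratedDeriv_const']
    rcases Nat.eq_zero_or_pos m with rfl | hmpos
    · simp
    · rw [if_neg (by omega), abs_zero, one_mul]
      exact (Real.rpow_pos_of_pos hjbh _).le
  | succ i ihi =>
    obtain ⟨K, hKpos, hK⟩ := ihi
    refine ⟨(n+1) * 2^n * K * D, by positivity, fun m hm h hh s hs ξ => ?_⟩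
    have hjbh := jbh_pos hh ξ
    have hωh : ContDiff ℝ (⊤:ℕ∞) (fun ζ : ℝ => ω (ζ / h)) :=
      hω.comp (contDiff_id.div_const h)
    have hc : ContDiff ℝ (⊤:ℕ∞) (fun ζ : ℝ => s * M * ω (ζ / h)) :=
      contDiff_const.mul hωh
    have hcpow : ContDiff ℝ (⊤:ℕ∞) (fun ζ : ℝ => (s * M * ω (ζ / h))^i) := hc.pow i
    have e0 : (fun ζ : ℝ => (s * M * ω (ζ / h))^(i+1))
        = fun ζ => (s * M * ω (ζ / h))^i * (s * M * ω (ζ / h)) := by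
      funext ζ; rw [pow_succ]
    rw [e0]
    refine le_trans (abs_iteratedDeriv_mul_le hcpow hc m ξ) ?_
    have hterm : ∀ j ∈ Finset.range (m+1),
        (m.choose j : ℝ) * |iteratedDeriv j (fun ζ => (s * M * ω (ζ / h))^i) ξ|
          * |iteratedDeriv (m-j) (fun ζ => s * M * ω (ζ / h)) ξ|
        ≤ 2^n * K * D * jbh h ξ ^ (-(m:ℝ)) := by
      intro j hj
      have hjm : j ≤ m := by simp only [Finset.mem_range] at hj; omega
      have h1 := hK j (by omega) h hh s hs ξ
      have h2 := hKd (m-j) h hh s hs ξ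
      have h3 : Kd (m-j) ≤ D := hDle (m-j) (by omega)
      have hmul : jbh h ξ ^ (-(j:ℝ)) * jbh h ξ ^ (-((m-j:ℕ):ℝ)) = jbh h ξ ^ (-(m:ℝ)) := by
        rw [← Real.rpow_add hjbh]
        congr 1
        rw [Nat.cast_sub hjm]; ring
      have hch : (m.choose j : ℝ) ≤ 2^n :=
        le_trans (choose_le_two_pow' hjm)
          (by exact_mod_cast pow_le_pow_right₀ (by norm_num : (1:ℝ) ≤ 2) (by omega : m ≤ n))
      calc (m.choose j : ℝ) * |iteratedDeriv j (fun ζ => (s * M * ω (ζ / h))^i) ξ|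
            * |iteratedDeriv (m-j) (fun ζ => s * M * ω (ζ / h)) ξ|
          ≤ (m.choose j : ℝ) * (K * jbh h ξ ^ (-(j:ℝ)))
            * (Kd (m-j) * jbh h ξ ^ (-((m-j:ℕ):ℝ))) := by
            apply mul_le_mul
            · exact mul_le_mul_of_nonneg_left h1 (Nat.cast_nonneg _)
            · exact h2
            · exact abs_nonneg _
            · have := (Real.rpow_pos_of_pos hjbh (-(j:ℝ))).le
              have h0 : (0:ℝ) ≤ (m.choose j : ℝ) := Nat.cast_nonneg _
              positivity
        _ = (m.choose j : ℝ) * K * Kd (m-j)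
            * (jbh h ξ ^ (-(j:ℝ)) * jbh h ξ ^ (-((m-j:ℕ):ℝ))) := by ring
        _ = (m.choose j : ℝ) * K * Kd (m-j) * jbh h ξ ^ (-(m:ℝ)) := by rw [hmul]
        _ ≤ 2^n * K * D * jbh h ξ ^ (-(m:ℝ)) := by
            apply mul_le_mul_of_nonneg_right _ (Real.rpow_pos_of_pos hjbh _).le
            have hKdnn := (hKdpos (m-j)).le
            have hchnn : (0:ℝ) ≤ (m.choose j : ℝ) := Nat.cast_nonneg _
            calc (m.choose j : ℝ) * K * Kd (m-j) ≤ 2^n * K * Kd (m-j) := by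
                  apply mul_le_mul_of_nonneg_right _ hKdnn
                  exact mul_le_mul_of_nonneg_right hch hKpos.le
              _ ≤ 2^n * K * D := by
                  apply mul_le_mul_of_nonneg_left h3 (by positivity)
    calc ∑ j ∈ Finset.range (m+1),
          (m.choose j : ℝ) * |iteratedDeriv j (fun ζ => (s * M * ω (ζ / h))^i) ξ|
            * |iteratedDeriv (m-j) (fun ζ => s * M * ω (ζ / h)) ξ|
        ≤ ∑ j ∈ Finset.range (m+1), 2^n * K * D * jbh h ξ ^ (-(m:ℝ)) :=
          Finset.sum_le_sum hterm
      _ = (m+1) * (2^n * K * D * jbh h ξ ^ (-(m:ℝ))) := by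
          rw [Finset.sum_const, Finset.card_range]
          push_cast; ring
      _ ≤ (n+1) * (2^n * K * D * jbh h ξ ^ (-(m:ℝ))) := by
          apply mul_le_mul_of_nonneg_right
          · exact_mod_cast by exact_mod_cast Nat.add_le_add_right hm 1
          · have := (Real.rpow_pos_of_pos hjbh (-(m:ℝ))).le
            positivity
      _ = (n+1) * 2^n * K * D * jbh h ξ ^ (-(m:ℝ)) := by ring

end cpowBound

/-- mixed estimates for `∂_ξ^α ∂_x^β e^{±λ(x,ξ)}`, `α, β ≥ 1`, where
`λ(x,ξ) = M·ω(ξ/h)·∫₀ˣ ⟨y⟩⁻¹ dy`; the constant may depend on `α, β, M, R, ω` but not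
on `h, x, ξ`. -/
theorem stmt7 (M R : ℝ) (hM : 0 < M) (hR : 1 < R)
    (ω : ℝ → ℝ) (hω : ContDiff ℝ (⊤ : ℕ∞) ω) (hωb : ∀ ξ : ℝ, |ω ξ| ≤ 1)
    (hω0 : ∀ ξ : ℝ, |ξ| ≤ 1 → ω ξ = 0)
    (hωcp : ∀ ξ₁ ξ₂ : ℝ, R ≤ ξ₁ → R ≤ ξ₂ → ω ξ₁ = ω ξ₂)
    (hωcm : ∀ ξ₁ ξ₂ : ℝ, ξ₁ ≤ -R → ξ₂ ≤ -R → ω ξ₁ = ω ξ₂) :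
    ∀ α β : ℕ, 1 ≤ α → 1 ≤ β → ∃ C > 0, ∀ h : ℝ, 1 ≤ h → ∀ x ξ : ℝ,
      ∀ s : ℝ, s = 1 ∨ s = -1 →
        |iteratedDeriv α
            (fun ξ' => iteratedDeriv β
              (fun x' => Real.exp
                (s * (M * ω (ξ' / h) * ∫ y in (0:ℝ)..x', (jb y)⁻¹))) x) ξ| ≤
          C * (1 + Real.log (jb x) *
              Set.indicator {ζ : ℝ | h ≤ |ζ| ∧ |ζ| ≤ h * R} (fun _ => (1:ℝ)) ξ) ^ α *
            jb x ^ (-(β : ℝ)) * jbh h ξ ^ (-(α : ℝ)) *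
            Real.exp (s * (M * ω (ξ / h) * ∫ y in (0:ℝ)..x, (jb y)⁻¹)) := by
  intro α β hα hβ
  obtain ⟨KE, hKEpos, hKE⟩ := exp_xi_bound hM hω hR hω0 hωcp hωcm α
  choose KP hKPpos hKP using cpow_bound hM hω hR hωb hω0 hωcp hωcm α
  choose CE hCEpos hCE using (fun i => emA_bound β i 0)
  set C : ℝ := (∑ i ∈ Finset.range (β+1), CE i * KP i) * 2^α * KE with hCdef
  have hCpos : 0 < C := by
    apply mul_pos (mul_pos _ (by positivity)) hKEpos
    apply Finset.sum_pos (fun i _ => mul_pos (hCEpos i) (hKPpos i))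
    exact ⟨0, Finset.mem_range.mpr (by omega)⟩
  refine ⟨C, hCpos, fun h hh x ξ s hs => ?_⟩
  have hhpos : (0:ℝ) < h := by linarith
  have hjbh := jbh_pos hh ξ
  set A := Real.arsinh x with hA
  set L := Real.log (jb x) with hL
  set χ := chiE R h ξ with hχ
  set V := Real.exp (s * M * ω (ξ / h) * A) with hV
  have hVpos : 0 < V := Real.exp_pos _
  have hbase : 1 ≤ 1 + L * χ := one_le_base R h x ξ
  have hωh : ContDiff ℝ (⊤:ℕ∞) (fun ζ : ℝ => ω (ζ / h)) :=
    hω.comp (contDiff_id.div_const h)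
  have hc : ContDiff ℝ (⊤:ℕ∞) (fun ζ : ℝ => s * M * ω (ζ / h)) :=
    contDiff_const.mul hωh
  -- rewrite the inner iterated derivative
  have hinner : (fun ξ' => iteratedDeriv β
        (fun x' => Real.exp (s * (M * ω (ξ' / h) * ∫ y in (0:ℝ)..x', (jb y)⁻¹))) x)
      = fun ξ' => ∑ i ∈ Finset.range (β+1),
          emA β i x * ((s * M * ω (ξ' / h))^i
            * Real.exp (s * M * ω (ξ' / h) * A)) := by
    funext ξ'
    have h1 : (fun x' => Real.exp (s * (M * ω (ξ' / h) * ∫ y in (0:ℝ)..x', (jb y)⁻¹)))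
        = fun x' => Real.exp ((s * M * ω (ξ' / h)) * Real.arsinh x') := by
      funext x'
      rw [integral_jb_inv]
      congr 1
      ring
    rw [h1, emA_expand (s * M * ω (ξ' / h)) β x]
    apply Finset.sum_congr rfl
    intro i _
    rw [hA]
    ring
  rw [hinner]
  -- contDiff of summands
  have hgcd : ∀ i : ℕ, ContDiff ℝ (⊤:ℕ∞)
      (fun ξ' => (s * M * ω (ξ' / h))^i * Real.exp (s * M * ω (ξ' / h) * A)) :=
    fun i => (hc.pow i).mul ((hc.mul contDiff_const).exp)
  have hsummand : ∀ i ∈ Finset.range (β+1), ContDiff ℝ (⊤:ℕ∞)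
      (fun ξ' => emA β i x * ((s * M * ω (ξ' / h))^i
        * Real.exp (s * M * ω (ξ' / h) * A))) :=
    fun i _ => contDiff_const.mul (hgcd i)
  rw [iteratedDeriv_sum' _ _ hsummand]
  -- bound each summand
  have hgi : ∀ i : ℕ, i ∈ Finset.range (β+1) →
      |iteratedDeriv α (fun ξ' => emA β i x * ((s * M * ω (ξ' / h))^i
          * Real.exp (s * M * ω (ξ' / h) * A))) ξ|
        ≤ (CE i * KP i) * (2^α * KE
            * ((1 + L * χ)^α * (jb x ^ (-(β:ℝ)) * jbh h ξ ^ (-(α:ℝ)) * V))) := by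
    intro i _
    rw [iteratedDeriv_cmul (hgcd i), abs_mul]
    have hem : |emA β i x| ≤ CE i * jb x ^ (-(β:ℝ)) := by
      have := hCE i x
      rw [iteratedDeriv_zero] at this
      convert this using 3
      norm_num
    have hleib := abs_iteratedDeriv_mul_le (f := fun ζ => (s * M * ω (ζ / h))^i)
      (g := fun ζ => Real.exp (s * M * ω (ζ / h) * A))
      (hc.pow i) ((hc.mul contDiff_const).exp) α ξ
    have hterm : ∀ a ∈ Finset.range (α+1),
        (α.choose a : ℝ) * |iteratedDeriv a (fun ζ => (s * M * ω (ζ / h))^i) ξ|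
          * |iteratedDeriv (α-a) (fun ζ => Real.exp (s * M * ω (ζ / h) * A)) ξ|
        ≤ (α.choose a : ℝ) * (KP i * KE * ((1 + L * χ)^α * jbh h ξ ^ (-(α:ℝ)) * V)) := by
      intro a ha
      have haα : a ≤ α := by simp only [Finset.mem_range] at ha; omega
      have h1 := hKP i a haα h hh s hs ξ
      have h2 : |iteratedDeriv (α-a) (fun ζ => Real.exp (s * M * ω (ζ / h) * A)) ξ|
          ≤ KE * (1 + L * χ) ^ (α-a) * jbh h ξ ^ (-((α-a:ℕ):ℝ)) * V := by
        rw [hA, hV]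
        exact hKE (α-a) (by omega) h hh s hs x ξ
      have hmul : jbh h ξ ^ (-(a:ℝ)) * jbh h ξ ^ (-((α-a:ℕ):ℝ)) = jbh h ξ ^ (-(α:ℝ)) := by
        rw [← Real.rpow_add hjbh]
        congr 1
        rw [Nat.cast_sub haα]; ring
      calc (α.choose a : ℝ) * |iteratedDeriv a (fun ζ => (s * M * ω (ζ / h))^i) ξ|
            * |iteratedDeriv (α-a) (fun ζ => Real.exp (s * M * ω (ζ / h) * A)) ξ|
          ≤ (α.choose a : ℝ) * (KP i * jbh h ξ ^ (-(a:ℝ)))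
            * (KE * (1 + L * χ) ^ (α-a) * jbh h ξ ^ (-((α-a:ℕ):ℝ)) * V) := by
            apply mul_le_mul
            · exact mul_le_mul_of_nonneg_left h1 (Nat.cast_nonneg _)
            · exact h2
            · exact abs_nonneg _
            · have h3 := (Real.rpow_pos_of_pos hjbh (-(a:ℝ))).le
              have h4 : (0:ℝ) ≤ (α.choose a : ℝ) := Nat.cast_nonneg _
              have h5 := (hKPpos i).le
              positivity
        _ = (α.choose a : ℝ) * (KP i * KE * ((1 + L * χ)^(α-a)
            * (jbh h ξ ^ (-(a:ℝ)) * jbh h ξ ^ (-((α-a:ℕ):ℝ))) * V)) := by ring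
        _ = (α.choose a : ℝ) * (KP i * KE * ((1 + L * χ)^(α-a)
            * jbh h ξ ^ (-(α:ℝ)) * V)) := by rw [hmul]
        _ ≤ (α.choose a : ℝ) * (KP i * KE * ((1 + L * χ)^α
            * jbh h ξ ^ (-(α:ℝ)) * V)) := by
            apply mul_le_mul_of_nonneg_left _ (Nat.cast_nonneg _)
            apply mul_le_mul_of_nonneg_left _ (mul_nonneg (hKPpos i).le hKEpos.le)
            apply mul_le_mul_of_nonneg_right _ hVpos.le
            apply mul_le_mul_of_nonneg_right _ (Real.rpow_pos_of_pos hjbh _).le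
            exact pow_le_pow_right₀ hbase (by omega)
    have hsum2 : ∑ a ∈ Finset.range (α+1),
        (α.choose a : ℝ) * (KP i * KE * ((1 + L * χ)^α * jbh h ξ ^ (-(α:ℝ)) * V))
        = 2^α * (KP i * KE * ((1 + L * χ)^α * jbh h ξ ^ (-(α:ℝ)) * V)) := by
      rw [← Finset.sum_mul]
      congr 1
      have := Nat.sum_range_choose α
      exact_mod_cast congrArg (Nat.cast : ℕ → ℝ) this
    have hBnn : (0:ℝ) ≤ 2^α * (KP i * KE * ((1 + L * χ)^α * jbh h ξ ^ (-(α:ℝ)) * V)) := by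
      have h3 := (Real.rpow_pos_of_pos hjbh (-(α:ℝ))).le
      have h5 := (hKPpos i).le
      have h6 : (0:ℝ) ≤ 1 + L * χ := by linarith
      positivity
    calc |emA β i x| * |iteratedDeriv α
          (fun ξ' => (s * M * ω (ξ' / h))^i * Real.exp (s * M * ω (ξ' / h) * A)) ξ|
        ≤ (CE i * jb x ^ (-(β:ℝ)))
          * (2^α * (KP i * KE * ((1 + L * χ)^α * jbh h ξ ^ (-(α:ℝ)) * V))) := by
          apply mul_le_mul hem _ (abs_nonneg _)
            (mul_nonneg (hCEpos i).le (Real.rpow_pos_of_pos (jb_pos x) _).le)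
          exact le_trans hleib (le_trans (Finset.sum_le_sum hterm) (le_of_eq hsum2))
      _ = (CE i * KP i) * (2^α * KE
          * ((1 + L * χ)^α * (jb x ^ (-(β:ℝ)) * jbh h ξ ^ (-(α:ℝ)) * V))) := by ring
  -- final summation
  have hfinal : |∑ i ∈ Finset.range (β+1), iteratedDeriv α
      (fun ξ' => emA β i x * ((s * M * ω (ξ' / h))^i
        * Real.exp (s * M * ω (ξ' / h) * A))) ξ|
      ≤ C * (1 + L * χ)^α * jb x ^ (-(β:ℝ)) * jbh h ξ ^ (-(α:ℝ)) * V := by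
    refine le_trans (Finset.abs_sum_le_sum_abs _ _) ?_
    refine le_trans (Finset.sum_le_sum hgi) ?_
    rw [← Finset.sum_mul, hCdef]
    apply le_of_eq
    ring
  refine le_trans hfinal (le_of_eq ?_)
  have hexp : Real.exp (s * (M * ω (ξ / h) * ∫ y in (0:ℝ)..x, (jb y)⁻¹)) = V := by
    rw [hV, hA, integral_jb_inv]
    congr 1
    ring
  rw [hexp, hχ]
  rfl
end
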